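/- arXiv:2010.12938 — 2 statements merged into one kernel-verified Lean document; each statement's English description precedes it below -/
import Mathlib

section
/- Convergence of Algorithm 1 (Proposition 2(i)): let (Q^0, W^0) ∈ S_Z, assume Cs is bounded above on S_Z, set C_s^* = sup_{(Q,W)∈S_Z} Cs(Q,W), and suppose for every v ≥ 1 the triple (Q^v, W^v, t^v) is a maximizer of R(Q,t) over S_{Z,t}(Q^{v−1}, W^{v−1}). Then both real sequences v ↦ Cs(Q^v, W^v) and v ↦ R(Q^v, t^v) (for v ≥ 1) are monotone nondecreasing and bounded above by C_s^*, and hence each converges to a real limit. -/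
open Matrix Finset ComplexOrder

namespace SRM

/-- `log det` of a complex matrix: real logarithm of the real part of the determinant. -/
noncomputable def phik {m n : ℕ} (H P : Matrix (Fin m) (Fin n) ℂ)
    (Q W : Matrix (Fin n) (Fin n) ℂ) : ℝ :=
  Real.log ((1 + H * Q * Hᴴ + P * W * Pᴴ).det.re)

noncomputable def phiHat {m n : ℕ} (P : Matrix (Fin m) (Fin n) ℂ)
    (W : Matrix (Fin n) (Fin n) ℂ) : ℝ :=
  Real.log ((1 + P * W * Pᴴ).det.re)

/-- The `k`-th eavesdropper rate `C_k(Q,W)`. -/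
noncomputable def Ceav {m n : ℕ} (H P : Matrix (Fin m) (Fin n) ℂ)
    (Q W : Matrix (Fin n) (Fin n) ℂ) : ℝ :=
  phik H P Q W - phiHat P W

/-- The legitimate (Alice-Bob) rate `C_0(Q)`. -/
noncomputable def C0 {m n : ℕ} (H0 : Matrix (Fin m) (Fin n) ℂ)
    (Q : Matrix (Fin n) (Fin n) ℂ) : ℝ :=
  Real.log ((1 + H0 * Q * H0ᴴ).det.re)

/-- Gradient matrix `T_k(Q',W')`. -/
noncomputable def Tmat {m n : ℕ} (H P : Matrix (Fin m) (Fin n) ℂ)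
    (Q' W' : Matrix (Fin n) (Fin n) ℂ) : Matrix (Fin n) (Fin n) ℂ :=
  Hᴴ * (1 + H * Q' * Hᴴ + P * W' * Pᴴ)⁻¹ * H

/-- Gradient matrix `R_k(Q',W')`. -/
noncomputable def Rmat {m n : ℕ} (H P : Matrix (Fin m) (Fin n) ℂ)
    (Q' W' : Matrix (Fin n) (Fin n) ℂ) : Matrix (Fin n) (Fin n) ℂ :=
  Pᴴ * (1 + H * Q' * Hᴴ + P * W' * Pᴴ)⁻¹ * P

/-- Gradient of `φ̂_k` with respect to `W`. -/
noncomputable def Dmat {m n : ℕ} (P : Matrix (Fin m) (Fin n) ℂ)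
    (W : Matrix (Fin n) (Fin n) ℂ) : Matrix (Fin n) (Fin n) ℂ :=
  Pᴴ * (1 + P * W * Pᴴ)⁻¹ * P

/-- Gradient of `C_0` with respect to `Q`. -/
noncomputable def D0mat {m n : ℕ} (H0 : Matrix (Fin m) (Fin n) ℂ)
    (Q : Matrix (Fin n) (Fin n) ℂ) : Matrix (Fin n) (Fin n) ℂ :=
  H0ᴴ * (1 + H0 * Q * H0ᴴ)⁻¹ * H0

/-- First-order (linear) approximation `φ̄_k(Q,W | Q',W')` of `φ_k` around `(Q',W')`. -/
noncomputable def phiBar {m n : ℕ} (H P : Matrix (Fin m) (Fin n) ℂ)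
    (Q W Q' W' : Matrix (Fin n) (Fin n) ℂ) : ℝ :=
  phik H P Q' W' + ((Tmat H P Q' W' * (Q - Q')).trace).re
    + ((Rmat H P Q' W' * (W - W')).trace).re

/-- Convexified eavesdropper rate `C_{lk}(Q,W | Q',W')`. -/
noncomputable def Clk {m n : ℕ} (H P : Matrix (Fin m) (Fin n) ℂ)
    (Q W Q' W' : Matrix (Fin n) (Fin n) ℂ) : ℝ :=
  phiBar H P Q W Q' W' - phiHat P W

/-- Secrecy rate `C_s(Q,W) = C_0(Q) - max_k C_k(Q,W)`. -/
noncomputable def Cs {m0 n : ℕ} {K : Type*} [Fintype K] [Nonempty K] {mk : K → ℕ}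
    (H0 : Matrix (Fin m0) (Fin n) ℂ)
    (Hm Pm : (k : K) → Matrix (Fin (mk k)) (Fin n) ℂ)
    (Q W : Matrix (Fin n) (Fin n) ℂ) : ℝ :=
  C0 H0 Q - Finset.univ.sup' Finset.univ_nonempty (fun k => Ceav (Hm k) (Pm k) Q W)

/-- The feasible set `S_Z`. -/
def SZ {mg n : ℕ} (G : Matrix (Fin mg) (Fin n) ℂ) (V : Matrix (Fin n) (Fin n) ℂ)
    (Pmax Γ : ℝ) : Set (Matrix (Fin n) (Fin n) ℂ × Matrix (Fin n) (Fin n) ℂ) :=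
  {Z | Z.1.PosSemidef ∧ Z.2.PosSemidef ∧
    ((G * Z.1 * Gᴴ + G * V * Z.2 * Vᴴ * Gᴴ).trace).re ≤ Γ ∧
    ((Z.1 + Z.2).trace).re ≤ Pmax}

/-- The approximate feasible set `S_{Z,t}(Q',W')`. -/
def SZt {mg n : ℕ} {K : Type*} [Fintype K] {mk : K → ℕ}
    (G : Matrix (Fin mg) (Fin n) ℂ) (V : Matrix (Fin n) (Fin n) ℂ) (Pmax Γ : ℝ)
    (Hm Pm : (k : K) → Matrix (Fin (mk k)) (Fin n) ℂ)
    (Q' W' : Matrix (Fin n) (Fin n) ℂ) :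
    Set ((Matrix (Fin n) (Fin n) ℂ × Matrix (Fin n) (Fin n) ℂ) × ℝ) :=
  {x | x.1 ∈ SZ G V Pmax Γ ∧ ∀ k : K, Clk (Hm k) (Pm k) x.1.1 x.1.2 Q' W' ≤ x.2}

/-- The objective `R(Q,t) = C_0(Q) - t`. -/
noncomputable def Robj {m0 n : ℕ} (H0 : Matrix (Fin m0) (Fin n) ℂ)
    (Q : Matrix (Fin n) (Fin n) ℂ) (t : ℝ) : ℝ :=
  C0 H0 Q - t

end SRM

namespace SRMAux
open Matrix ComplexOrder

variable {n : ℕ}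

lemma trace_eq_sum_eig {A : Matrix (Fin n) (Fin n) ℂ} (hA : A.IsHermitian) :
    A.trace = ∑ i, (hA.eigenvalues i : ℂ) := by
  exact hA.trace_eq_sum_eigenvalues

lemma det_re_eq {A : Matrix (Fin n) (Fin n) ℂ} (hA : A.IsHermitian) :
    A.det.re = ∏ i, hA.eigenvalues i := by
  rw [hA.det_eq_prod_eigenvalues]; norm_cast

lemma logdet_le_trace_sub {C : Matrix (Fin n) (Fin n) ℂ} (hC : C.PosDef) :
    Real.log C.det.re ≤ C.trace.re - n := by
  have hpos := hC.eigenvalues_pos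
  have h1 : C.det.re = ∏ i, hC.isHermitian.eigenvalues i := det_re_eq hC.isHermitian
  have h2 : C.trace.re = ∑ i, hC.isHermitian.eigenvalues i := by
    rw [trace_eq_sum_eig hC.isHermitian, ← Complex.ofReal_sum, Complex.ofReal_re]
  rw [h1, h2, Real.log_prod (fun i _ => (hpos i).ne')]
  calc ∑ i, Real.log (hC.isHermitian.eigenvalues i)
      ≤ ∑ i, (hC.isHermitian.eigenvalues i - 1) :=
        Finset.sum_le_sum fun i _ => Real.log_le_sub_one_of_pos (hpos i)
    _ = (∑ i, hC.isHermitian.eigenvalues i) - n := by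
        rw [Finset.sum_sub_distrib]; simp


lemma posDef_conj {S B : Matrix (Fin n) (Fin n) ℂ} (hB : B.PosDef) (hS : IsUnit S) :
    (Sᴴ * B * S).PosDef := by
  exact hB.conjTranspose_mul_mul_same (Matrix.mulVec_injective_iff_isUnit.mpr hS)


lemma det_eq_re {A : Matrix (Fin n) (Fin n) ℂ} (hA : A.PosDef) :
    A.det = (A.det.re : ℂ) ∧ 0 < A.det.re := by
  have h := hA.det_pos
  rw [Complex.lt_def] at h
  exact ⟨Complex.ext rfl (by simpa using h.2.symm), by simpa using h.1⟩

open scoped MatrixOrder in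
lemma logdet_sub_le {A B : Matrix (Fin n) (Fin n) ℂ} (hA : A.PosDef) (hB : B.PosDef) :
    Real.log B.det.re ≤ Real.log A.det.re + ((A⁻¹ * (B - A)).trace).re := by
  obtain ⟨hAre, hApos⟩ := det_eq_re hA
  obtain ⟨hBre, hBpos⟩ := det_eq_re hB
  have hAinv : A⁻¹.PosDef := hA.inv
  set S := CFC.sqrt A⁻¹ with hSdef
  have hSS : S * S = A⁻¹ := CFC.sqrt_mul_sqrt_self _ hAinv.posSemidef.nonneg
  have hSherm : S.IsHermitian := (Matrix.nonneg_iff_posSemidef.mp (CFC.sqrt_nonneg _)).1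
  have hdetAne : A.det ≠ 0 := by
    rw [hAre]; exact_mod_cast hApos.ne'
  have hdetS : S.det * S.det = A.det⁻¹ := by
    rw [← det_mul, hSS, det_nonsing_inv, Ring.inverse_eq_inv']
  have hSunit : IsUnit S := by
    apply (Matrix.isUnit_iff_isUnit_det S).2
    apply isUnit_iff_ne_zero.2
    intro h0
    rw [h0, mul_zero] at hdetS
    exact hdetAne (by rw [← inv_inv A.det, ← hdetS, _root_.inv_zero])
  have hC : (Sᴴ * B * S).PosDef := posDef_conj hB hSunit
  have key := logdet_le_trace_sub hC
  have hCdet : (Sᴴ * B * S).det = ((A.det.re⁻¹ * B.det.re : ℝ) : ℂ) := by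
    rw [hSherm.eq, det_mul, det_mul, mul_comm S.det B.det, mul_assoc, hdetS,
      Complex.ofReal_mul, Complex.ofReal_inv, ← hAre, ← hBre]
    ring
  have hCtrace : (Sᴴ * B * S).trace = (A⁻¹ * B).trace := by
    rw [hSherm.eq, trace_mul_cycle, hSS]
  have hlog : Real.log (Sᴴ * B * S).det.re = Real.log B.det.re - Real.log A.det.re := by
    rw [hCdet, Complex.ofReal_re, Real.log_mul (by positivity) hBpos.ne', Real.log_inv]
    ring
  have htr : ((A⁻¹ * (B - A)).trace).re = ((A⁻¹ * B).trace).re - n := by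
    have h1 : A⁻¹ * (B - A) = A⁻¹ * B - 1 := by
      rw [mul_sub, Matrix.nonsing_inv_mul A hdetAne.isUnit]
    rw [h1, trace_sub, Complex.sub_re, trace_one]
    simp
  rw [htr]
  rw [hlog, hCtrace] at key
  linarith


lemma trace_conj_cycle {m : ℕ} (M : Matrix (Fin m) (Fin m) ℂ)
    (H : Matrix (Fin m) (Fin n) ℂ) (D : Matrix (Fin n) (Fin n) ℂ) :
    (M * (H * D * Hᴴ)).trace = ((Hᴴ * M * H) * D).trace := by
  rw [show M * (H * D * Hᴴ) = (M * H) * D * Hᴴ by simp only [Matrix.mul_assoc],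
    trace_mul_cycle]
  simp only [Matrix.mul_assoc]

end SRMAux

namespace SRM
open Matrix ComplexOrder

lemma phik_le_phiBar {m n : ℕ} (H P : Matrix (Fin m) (Fin n) ℂ)
    {Q W Q' W' : Matrix (Fin n) (Fin n) ℂ}
    (hQ : Q.PosSemidef) (hW : W.PosSemidef) (hQ' : Q'.PosSemidef) (hW' : W'.PosSemidef) :
    phik H P Q W ≤ phiBar H P Q W Q' W' := by
  set A := (1 : Matrix (Fin m) (Fin m) ℂ) + H * Q' * Hᴴ + P * W' * Pᴴ with hAdef
  set B := (1 : Matrix (Fin m) (Fin m) ℂ) + H * Q * Hᴴ + P * W * Pᴴ with hBdef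
  have hApd : A.PosDef :=
    ((Matrix.PosDef.one.add_posSemidef (hQ'.mul_mul_conjTranspose_same H)).add_posSemidef
      (hW'.mul_mul_conjTranspose_same P))
  have hBpd : B.PosDef :=
    ((Matrix.PosDef.one.add_posSemidef (hQ.mul_mul_conjTranspose_same H)).add_posSemidef
      (hW.mul_mul_conjTranspose_same P))
  have key := SRMAux.logdet_sub_le hApd hBpd
  have hBA : B - A = H * (Q - Q') * Hᴴ + P * (W - W') * Pᴴ := by
    simp only [hAdef, hBdef, Matrix.mul_sub, Matrix.sub_mul]
    abel
  have htr : (A⁻¹ * (B - A)).trace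
      = (Tmat H P Q' W' * (Q - Q')).trace + (Rmat H P Q' W' * (W - W')).trace := by
    rw [hBA, mul_add, trace_add, SRMAux.trace_conj_cycle, SRMAux.trace_conj_cycle]
    rfl
  rw [htr, Complex.add_re] at key
  simp only [phik, phiBar, ← hAdef, ← hBdef]
  linarith

lemma Clk_self {m n : ℕ} (H P : Matrix (Fin m) (Fin n) ℂ)
    (Q W : Matrix (Fin n) (Fin n) ℂ) :
    Clk H P Q W Q W = Ceav H P Q W := by
  simp [Clk, Ceav, phiBar]

end SRM

namespace SRM

/-- Proposition 2(i): under the SCA iteration, both `v ↦ C_s(Q^v,W^v)`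
and `v ↦ R(Q^v,t^v)` (for `v ≥ 1`) are monotone nondecreasing and bounded above by
`C_s^*`, hence each converges to a real limit. -/
theorem sca_monotone_bounded_converges {n mg m0 : ℕ} {K : Type*} [Fintype K] [Nonempty K]
    {mk : K → ℕ} (hn : 0 < n)
    (H0 : Matrix (Fin m0) (Fin n) ℂ)
    (G : Matrix (Fin mg) (Fin n) ℂ) (V : Matrix (Fin n) (Fin n) ℂ)
    (Pmax Γ : ℝ) (hPmax : 0 ≤ Pmax) (hΓ : 0 ≤ Γ)
    (Hm Pm : (k : K) → Matrix (Fin (mk k)) (Fin n) ℂ)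
    (Qs Ws : ℕ → Matrix (Fin n) (Fin n) ℂ) (ts : ℕ → ℝ)
    (h0 : (Qs 0, Ws 0) ∈ SZ G V Pmax Γ)
    (hbdd : BddAbove ((fun Z => Cs H0 Hm Pm Z.1 Z.2) '' SZ G V Pmax Γ))
    (hiter : ∀ v : ℕ, 1 ≤ v →
      ((Qs v, Ws v), ts v) ∈ SZt G V Pmax Γ Hm Pm (Qs (v - 1)) (Ws (v - 1)) ∧
      ∀ x ∈ SZt G V Pmax Γ Hm Pm (Qs (v - 1)) (Ws (v - 1)),
        Robj H0 x.1.1 x.2 ≤ Robj H0 (Qs v) (ts v)) :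
    (∀ v w : ℕ, 1 ≤ v → v ≤ w →
      Cs H0 Hm Pm (Qs v) (Ws v) ≤ Cs H0 Hm Pm (Qs w) (Ws w)) ∧
    (∀ v : ℕ, 1 ≤ v →
      Cs H0 Hm Pm (Qs v) (Ws v) ≤ sSup ((fun Z => Cs H0 Hm Pm Z.1 Z.2) '' SZ G V Pmax Γ)) ∧
    (∀ v w : ℕ, 1 ≤ v → v ≤ w → Robj H0 (Qs v) (ts v) ≤ Robj H0 (Qs w) (ts w)) ∧
    (∀ v : ℕ, 1 ≤ v →
      Robj H0 (Qs v) (ts v) ≤ sSup ((fun Z => Cs H0 Hm Pm Z.1 Z.2) '' SZ G V Pmax Γ)) ∧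
    (∃ L : ℝ, Filter.Tendsto (fun v => Cs H0 Hm Pm (Qs v) (Ws v)) Filter.atTop (nhds L)) ∧
    (∃ L : ℝ, Filter.Tendsto (fun v => Robj H0 (Qs v) (ts v)) Filter.atTop (nhds L)) := by
  classical
  set s := sSup ((fun Z => Cs H0 Hm Pm Z.1 Z.2) '' SZ G V Pmax Γ) with hs
  set f : ℕ → ℝ := fun v => Cs H0 Hm Pm (Qs v) (Ws v) with hf
  set g : ℕ → ℝ := fun v => Robj H0 (Qs v) (ts v) with hg
  have memSZ : ∀ v, (Qs v, Ws v) ∈ SZ G V Pmax Γ := by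
    intro v
    rcases Nat.eq_zero_or_pos v with h | h
    · rw [h]; exact h0
    · exact ((hiter v h).1).1
  have hfle : ∀ v, f v ≤ s := fun v => le_csSup hbdd ⟨(Qs v, Ws v), memSZ v, rfl⟩
  have hgf : ∀ v, 1 ≤ v → g v ≤ f v := by
    intro v hv
    have hmem := (hiter v hv).1
    have hsup : Finset.univ.sup' Finset.univ_nonempty
        (fun k => Ceav (Hm k) (Pm k) (Qs v) (Ws v)) ≤ ts v := by
      apply Finset.sup'_le
      intro k _
      have h1 : Ceav (Hm k) (Pm k) (Qs v) (Ws v)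
          ≤ Clk (Hm k) (Pm k) (Qs v) (Ws v) (Qs (v-1)) (Ws (v-1)) := by
        have := phik_le_phiBar (Hm k) (Pm k) (memSZ v).1 (memSZ v).2.1
          (memSZ (v-1)).1 (memSZ (v-1)).2.1
        simp only [Ceav, Clk]
        linarith
      exact h1.trans (hmem.2 k)
    simp only [hg, hf, Robj, Cs]
    linarith
  have hfg : ∀ v, f v ≤ g (v+1) := by
    intro v
    have h1 := (hiter (v+1) (by omega)).2
    have hmem : (((Qs v, Ws v), Finset.univ.sup' Finset.univ_nonempty
        (fun k => Ceav (Hm k) (Pm k) (Qs v) (Ws v))))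
        ∈ SZt G V Pmax Γ Hm Pm (Qs (v+1-1)) (Ws (v+1-1)) := by
      simp only [Nat.add_sub_cancel]
      refine ⟨memSZ v, fun k => ?_⟩
      rw [Clk_self]
      exact Finset.le_sup' (fun k => Ceav (Hm k) (Pm k) (Qs v) (Ws v)) (Finset.mem_univ k)
    have h2 := h1 _ hmem
    simpa [Robj, Cs, hg, hf] using h2
  have hfsucc : ∀ v, f v ≤ f (v+1) := fun v => (hfg v).trans (hgf (v+1) (by omega))
  have hmonof : Monotone f := monotone_nat_of_le_succ hfsucc
  have hgsucc : ∀ v, 1 ≤ v → g v ≤ g (v+1) := fun v hv => (hgf v hv).trans (hfg v)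
  have mono1 : ∀ v w : ℕ, 1 ≤ v → v ≤ w → g v ≤ g w := by
    intro v w hv hvw
    induction w, hvw using Nat.le_induction with
    | base => exact le_refl _
    | succ w hw ih => exact ih.trans (hgsucc w (hv.trans hw))
  have hgle : ∀ v, 1 ≤ v → g v ≤ s := fun v hv => (hgf v hv).trans (hfle v)
  refine ⟨fun v w _ hvw => hmonof hvw, fun v _ => hfle v, mono1, hgle, ?_, ?_⟩
  · exact ⟨_, tendsto_atTop_ciSup hmonof ⟨s, fun x ⟨v, hv⟩ => hv ▸ hfle v⟩⟩
  · have hmonog : Monotone (fun v => g (v+1)) :=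
      monotone_nat_of_le_succ (fun v => hgsucc (v+1) (by omega))
    have hbddg : BddAbove (Set.range (fun v => g (v+1))) :=
      ⟨s, fun x ⟨v, hv⟩ => hv ▸ hgle (v+1) (by omega)⟩
    exact ⟨_, (Filter.tendsto_add_atTop_iff_nat 1).mp (tendsto_atTop_ciSup hmonog hbddg)⟩


end SRM
end

section
/- Proposition 4 (global optimality under concavity): let (Q, W) be a PSD Hermitian pair and t ∈ ℝ satisfying the KKT system of problem (P3a) at the convergence point (expansion point equal to (Q,W)): there exist μ1 ≥ 0, μ2 ≥ 0, nonnegative λk (k ∈ K), and PSD Hermitian M, N with (i) −D0(Q) + μ1 GᴴG + μ2 I − M + Σ_{k∈K} λk Tk(Q,W) = 0; (ii) μ1 Vᴴ Gᴴ G V + μ2 I − N + Σ_{k∈K} λk (Rk(Q,W) − Dk(W)) = 0; (iii) Σ_{k∈K} λk = 1; (iv) μ1(Re tr(G Q Gᴴ + G V W Vᴴ Gᴴ) − Γ) = 0, μ2(Re tr(Q+W) − P) = 0, M Q = 0, N W = 0, λk(Ck(Q,W) − t) = 0 for all k; (v) (Q,W) ∈ S_Z and Ck(Q,W) ≤ t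 for all k. Assume additionally that for every k ∈ K the function (Q̂,Ŵ) ↦ C0(Q̂) − Ck(Q̂,Ŵ) is concave on the convex set of pairs of n×n PSD Hermitian matrices. Then (Q,W) is a global maximizer of the secrecy rate: Cs(Q,W) ≥ Cs(Q̂,Ŵ) for every (Q̂,Ŵ) ∈ S_Z. -/
open Matrix Finset ComplexOrder

namespace SRM

open Polynomial

lemma hasDerivAt_det_one_add_smul {n : ℕ} (C : Matrix (Fin n) (Fin n) ℂ) :
    HasDerivAt (fun z : ℂ => (1 + z • C).det) C.trace 0 := by
  have key : (fun z : ℂ => (1 + z • C).det)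
      = fun z => ((1 : ℂ[X]) + Polynomial.C C.trace * X
          + (Matrix.det (1 + (X : ℂ[X]) • C.map Polynomial.C)).divX.divX * X ^ 2).eval z := by
    funext z
    rw [Matrix.det_one_add_smul z C]
    simp only [Polynomial.eval_add, Polynomial.eval_one, Polynomial.eval_mul, Polynomial.eval_C,
      Polynomial.eval_pow, Polynomial.eval_X]
  rw [key]
  have h := ((1 : ℂ[X]) + Polynomial.C C.trace * X
      + (Matrix.det (1 + (X : ℂ[X]) • C.map Polynomial.C)).divX.divX * X ^ 2).hasDerivAt (0 : ℂ)
  convert h using 1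
  · rfl
  simp [Polynomial.derivative_mul]

lemma hasDerivAt_det_affine {n : ℕ} (A B : Matrix (Fin n) (Fin n) ℂ) (hA : IsUnit A.det) :
    HasDerivAt (fun z : ℂ => (A + z • B).det) (A.det * (A⁻¹ * B).trace) 0 := by
  have hfun : (fun z : ℂ => (A + z • B).det)
      = fun z => A.det * (1 + z • (A⁻¹ * B)).det := by
    funext z
    rw [← Matrix.det_mul, Matrix.mul_add, Matrix.mul_one, Matrix.mul_smul,
      ← Matrix.mul_assoc, Matrix.mul_nonsing_inv _ hA, Matrix.one_mul]
  rw [hfun]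
  exact (hasDerivAt_det_one_add_smul _).const_mul A.det

lemma hasDerivAt_logdet {n : ℕ} (A B : Matrix (Fin n) (Fin n) ℂ) (hA : A.PosDef) :
    HasDerivAt (fun s : ℝ => Real.log ((A + (s : ℝ) • B).det.re))
      (((A⁻¹ * B).trace).re) 0 := by
  have hdet : (0 : ℂ) < A.det := hA.det_pos
  have hre : 0 < A.det.re := (Complex.lt_def.mp hdet).1
  have him : A.det.im = 0 := ((Complex.lt_def.mp hdet).2).symm
  have h1 : HasDerivAt (fun z : ℂ => (A + z • B).det) (A.det * (A⁻¹ * B).trace)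
      ((0 : ℝ) : ℂ) := by
    simpa using hasDerivAt_det_affine A B (hdet.ne'.isUnit)
  have h2 : HasDerivAt (fun s : ℝ => ((A + ((s : ℝ) : ℂ) • B).det).re)
      ((A.det * (A⁻¹ * B).trace).re) 0 := h1.real_of_complex
  have h2' : HasDerivAt (fun s : ℝ => ((A + (s : ℝ) • B).det).re)
      ((A.det * (A⁻¹ * B).trace).re) 0 := by
    have : ∀ s : ℝ, (s : ℝ) • B = ((s : ℝ) : ℂ) • B := fun s => by
      ext i j; simp [Complex.real_smul]
    simp only [this]
    exact h2
  have h3 := h2'.log (by simpa using hre.ne')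
  convert h3 using 1
  simp only [Complex.ofReal_zero, zero_smul, add_zero, Complex.mul_re, him]
  field_simp
  ring



lemma trace_re_nonneg {n : ℕ} {C : Matrix (Fin n) (Fin n) ℂ} (hC : C.PosSemidef) :
    0 ≤ (C.trace).re := by
  have h : ∀ i, 0 ≤ C i i := fun i => by
    exact hC.diag_nonneg
  have h2 : (0 : ℂ) ≤ C.trace := Finset.sum_nonneg fun i _ => h i
  exact (Complex.le_def.mp h2).1

lemma trace_mul_psd_re_nonneg {n : ℕ} {M Q : Matrix (Fin n) (Fin n) ℂ}
    (hM : M.PosSemidef) (hQ : Q.PosSemidef) : 0 ≤ ((M * Q).trace).re := by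
  obtain ⟨B, rfl⟩ : ∃ B : Matrix (Fin n) (Fin n) ℂ, Q = Bᴴ * B := by
    open scoped MatrixOrder in
    exact CStarAlgebra.nonneg_iff_eq_star_mul_self.mp hQ.nonneg
  have key : (M * (Bᴴ * B)).trace = (B * M * Bᴴ).trace := by
    rw [← Matrix.mul_assoc, Matrix.trace_mul_comm, ← Matrix.mul_assoc]
  rw [key]
  exact trace_re_nonneg (hM.mul_mul_conjTranspose_same B)

lemma trace_sandwich {m n : ℕ} (U : Matrix (Fin m) (Fin n) ℂ)
    (S : Matrix (Fin m) (Fin m) ℂ) (Y : Matrix (Fin n) (Fin n) ℂ) :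
    ((Uᴴ * S * U * Y).trace) = ((S * (U * Y * Uᴴ)).trace) := by
  rw [Matrix.mul_assoc, Matrix.mul_assoc, Matrix.trace_mul_comm, Matrix.mul_assoc,
    Matrix.mul_assoc]

lemma posDef_one_add {m n : ℕ} (H : Matrix (Fin m) (Fin n) ℂ) {Q : Matrix (Fin n) (Fin n) ℂ}
    (hQ : Q.PosSemidef) : (1 + H * Q * Hᴴ).PosDef :=
  Matrix.PosDef.add_posSemidef Matrix.PosDef.one (hQ.mul_mul_conjTranspose_same H)

lemma posDef_one_add2 {m n : ℕ} (H P : Matrix (Fin m) (Fin n) ℂ)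
    {Q W : Matrix (Fin n) (Fin n) ℂ} (hQ : Q.PosSemidef) (hW : W.PosSemidef) :
    (1 + H * Q * Hᴴ + P * W * Pᴴ).PosDef :=
  Matrix.PosDef.add_posSemidef (posDef_one_add H hQ) (hW.mul_mul_conjTranspose_same P)

lemma line_split {m n : ℕ} (H : Matrix (Fin m) (Fin n) ℂ)
    (Q DQ : Matrix (Fin n) (Fin n) ℂ) (s : ℝ) :
    1 + H * (Q + s • DQ) * Hᴴ = (1 + H * Q * Hᴴ) + s • (H * DQ * Hᴴ) := by
  rw [Matrix.mul_add, Matrix.add_mul, Matrix.mul_smul, Matrix.smul_mul]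
  abel

lemma hasDerivAt_C0_line {m n : ℕ} (H : Matrix (Fin m) (Fin n) ℂ)
    {Q : Matrix (Fin n) (Fin n) ℂ} (DQ : Matrix (Fin n) (Fin n) ℂ) (hQ : Q.PosSemidef) :
    HasDerivAt (fun s : ℝ => C0 H (Q + s • DQ)) (((D0mat H Q * DQ).trace).re) 0 := by
  have hfun : (fun s : ℝ => C0 H (Q + s • DQ))
      = fun s : ℝ => Real.log (((1 + H * Q * Hᴴ) + s • (H * DQ * Hᴴ)).det.re) := by
    funext s; rw [C0, line_split]
  rw [hfun]
  have h := hasDerivAt_logdet (1 + H * Q * Hᴴ) (H * DQ * Hᴴ) (posDef_one_add H hQ)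
  convert h using 2
  rw [D0mat, trace_sandwich]

lemma hasDerivAt_phik_line {m n : ℕ} (H P : Matrix (Fin m) (Fin n) ℂ)
    {Q W : Matrix (Fin n) (Fin n) ℂ} (DQ DW : Matrix (Fin n) (Fin n) ℂ)
    (hQ : Q.PosSemidef) (hW : W.PosSemidef) :
    HasDerivAt (fun s : ℝ => phik H P (Q + s • DQ) (W + s • DW))
      (((Tmat H P Q W * DQ).trace).re + ((Rmat H P Q W * DW).trace).re) 0 := by
  set A := 1 + H * Q * Hᴴ + P * W * Pᴴ with hA
  have hfun : (fun s : ℝ => phik H P (Q + s • DQ) (W + s • DW))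
      = fun s : ℝ => Real.log ((A + s • (H * DQ * Hᴴ + P * DW * Pᴴ)).det.re) := by
    funext s
    rw [phik]
    congr 2
    rw [hA, Matrix.mul_add, Matrix.add_mul, Matrix.mul_smul, Matrix.smul_mul,
      Matrix.mul_add P, Matrix.add_mul, Matrix.mul_smul, Matrix.smul_mul, smul_add]
    congr 1
    abel
  rw [hfun]
  have h := hasDerivAt_logdet A (H * DQ * Hᴴ + P * DW * Pᴴ)
    (posDef_one_add2 H P hQ hW)
  convert h using 2
  rw [Matrix.mul_add, Matrix.trace_add, Complex.add_re]
  congr 2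
  · rw [Tmat, trace_sandwich, ← Matrix.mul_assoc, ← hA]
  · rw [Rmat, trace_sandwich, ← Matrix.mul_assoc, ← hA]

lemma hasDerivAt_phiHat_line {m n : ℕ} (P : Matrix (Fin m) (Fin n) ℂ)
    {W : Matrix (Fin n) (Fin n) ℂ} (DW : Matrix (Fin n) (Fin n) ℂ) (hW : W.PosSemidef) :
    HasDerivAt (fun s : ℝ => phiHat P (W + s • DW)) (((Dmat P W * DW).trace).re) 0 := by
  have hfun : (fun s : ℝ => phiHat P (W + s • DW))
      = fun s : ℝ => Real.log (((1 + P * W * Pᴴ) + s • (P * DW * Pᴴ)).det.re) := by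
    funext s; rw [phiHat, line_split]
  rw [hfun]
  have h := hasDerivAt_logdet (1 + P * W * Pᴴ) (P * DW * Pᴴ) (posDef_one_add P hW)
  convert h using 2
  rw [Dmat, trace_sandwich, ← Matrix.mul_assoc]

lemma le_deriv_of_slope {g : ℝ → ℝ} {d c : ℝ} (hg : HasDerivAt g d 0)
    (h : ∀ s : ℝ, 0 < s → s ≤ 1 → c ≤ (g s - g 0) / s) : c ≤ d := by
  have ht : Filter.Tendsto (slope g 0) (nhdsWithin 0 (Set.Ioi 0)) (nhds d) :=
    ((hasDerivAt_iff_tendsto_slope.mp hg).mono_left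
      (nhdsWithin_mono 0 (fun x hx => ne_of_gt hx)))
  refine ge_of_tendsto ht ?_
  filter_upwards [Ioc_mem_nhdsGT_of_mem (Set.left_mem_Ico.mpr one_pos)] with s hs
  rw [slope_def_field]
  simpa using h s hs.1 hs.2

lemma trace_sandwich' {m n : ℕ} (U : Matrix (Fin m) (Fin n) ℂ) (Y : Matrix (Fin n) (Fin n) ℂ) :
    ((Uᴴ * U * Y).trace) = ((U * Y * Uᴴ).trace) := by
  rw [Matrix.mul_assoc, Matrix.trace_mul_comm]

set_option maxHeartbeats 1000000 in

/-- Proposition 4: if `(Q,W,t)` satisfies the KKT system of (P3a) at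
the convergence point, and if for every `k` the function `C_0 - C_k` is concave on
the set of PSD Hermitian pairs, then `(Q,W)` is a global maximizer of the secrecy
rate over `S_Z`. -/
theorem kkt_global_opt {n mg m0 : ℕ} {K : Type*} [Fintype K] [Nonempty K] {mk : K → ℕ} (hn : 0 < n)
    (H0 : Matrix (Fin m0) (Fin n) ℂ)
    (G : Matrix (Fin mg) (Fin n) ℂ) (V : Matrix (Fin n) (Fin n) ℂ)
    (Pmax Γ : ℝ) (hPmax : 0 ≤ Pmax) (hΓ : 0 ≤ Γ)
    (Hm Pm : (k : K) → Matrix (Fin (mk k)) (Fin n) ℂ)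
    (Q W M N : Matrix (Fin n) (Fin n) ℂ) (t : ℝ)
    (hQ : Q.PosSemidef) (hW : W.PosSemidef) (hM : M.PosSemidef) (hN : N.PosSemidef)
    (μ1 μ2 : ℝ) (hμ1 : 0 ≤ μ1) (hμ2 : 0 ≤ μ2)
    (lam : K → ℝ) (hlam : ∀ k : K, 0 ≤ lam k)
    (kkt1 : -(D0mat H0 Q) + μ1 • (Gᴴ * G) + μ2 • (1 : Matrix (Fin n) (Fin n) ℂ) - M
      + ∑ k : K, lam k • Tmat (Hm k) (Pm k) Q W = 0)
    (kkt2 : μ1 • (Vᴴ * Gᴴ * G * V) + μ2 • (1 : Matrix (Fin n) (Fin n) ℂ) - N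
      + ∑ k : K, lam k • (Rmat (Hm k) (Pm k) Q W - Dmat (Pm k) W) = 0)
    (kkt3 : ∑ k : K, lam k = 1)
    (kkt4a : μ1 * (((G * Q * Gᴴ + G * V * W * Vᴴ * Gᴴ).trace).re - Γ) = 0)
    (kkt4b : μ2 * (((Q + W).trace).re - Pmax) = 0)
    (kkt4c : M * Q = 0) (kkt4d : N * W = 0)
    (kkt4e : ∀ k : K, lam k * (Ceav (Hm k) (Pm k) Q W - t) = 0)
    (kkt5a : (Q, W) ∈ SZ G V Pmax Γ)
    (kkt5b : ∀ k : K, Ceav (Hm k) (Pm k) Q W ≤ t)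
    -- concavity of C0 - Ck on the set of PSD Hermitian pairs:
    (hconc : ∀ k : K, ConcaveOn ℝ
      {Z : Matrix (Fin n) (Fin n) ℂ × Matrix (Fin n) (Fin n) ℂ |
        Z.1.PosSemidef ∧ Z.2.PosSemidef}
      (fun Z => C0 H0 Z.1 - Ceav (Hm k) (Pm k) Z.1 Z.2)) :
    ∀ Z ∈ SZ G V Pmax Γ, Cs H0 Hm Pm Z.1 Z.2 ≤ Cs H0 Hm Pm Q W := by
  intro Z2 hZ2
  obtain ⟨hQ2, hW2, hg2, hp2⟩ := hZ2
  obtain ⟨_, _, hg1, hp1⟩ := kkt5a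
  set DQ := Z2.1 - Q with hDQ
  set DW := Z2.2 - W with hDW
  set g : ℝ → ℝ := fun s => ∑ k : K, lam k *
    (C0 H0 (Q + s • DQ) - Ceav (Hm k) (Pm k) (Q + s • DQ) (W + s • DW)) with hg
  set FZ : ℝ := ∑ k : K, lam k * (C0 H0 Q - Ceav (Hm k) (Pm k) Q W) with hFZ
  set F2 : ℝ := ∑ k : K, lam k * (C0 H0 Z2.1 - Ceav (Hm k) (Pm k) Z2.1 Z2.2) with hF2
  have hg0 : g 0 = FZ := by
    simp only [hg, hFZ, zero_smul, add_zero]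
  -- derivative of g at 0
  have hderiv : HasDerivAt g
      (∑ k : K, lam k * (((D0mat H0 Q * DQ).trace).re
        - (((Tmat (Hm k) (Pm k) Q W * DQ).trace).re
            + ((Rmat (Hm k) (Pm k) Q W * DW).trace).re)
        + ((Dmat (Pm k) W * DW).trace).re)) 0 := by
    apply HasDerivAt.fun_sum
    intro k _
    have h1 := hasDerivAt_C0_line H0 DQ hQ
    have h2 := hasDerivAt_phik_line (Hm k) (Pm k) DQ DW hQ hW
    have h3 := hasDerivAt_phiHat_line (Pm k) DW hW
    have e := ((h1.sub h2).add h3).const_mul (lam k)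
    have hfe : (fun s : ℝ => lam k * ((C0 H0 (Q + s • DQ)
          - phik (Hm k) (Pm k) (Q + s • DQ) (W + s • DW))
          + phiHat (Pm k) (W + s • DW)))
        = fun s : ℝ => lam k * (C0 H0 (Q + s • DQ)
          - Ceav (Hm k) (Pm k) (Q + s • DQ) (W + s • DW)) := by
      funext s; rw [Ceav]; ring
    rw [← hfe]
    exact e
  set d : ℝ := ∑ k : K, lam k * (((D0mat H0 Q * DQ).trace).re
        - (((Tmat (Hm k) (Pm k) Q W * DQ).trace).re
            + ((Rmat (Hm k) (Pm k) Q W * DW).trace).re)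
        + ((Dmat (Pm k) W * DW).trace).re) with hd
  -- concavity: slope bound
  have hslope : F2 - FZ ≤ d := by
    apply le_deriv_of_slope hderiv
    intro s hs hs1
    have hpt : (1 - s) • ((Q, W) : Matrix (Fin n) (Fin n) ℂ × Matrix (Fin n) (Fin n) ℂ)
        + s • Z2 = (Q + s • DQ, W + s • DW) := by
      have e1 : (1 - s) • Q + s • Z2.1 = Q + s • DQ := by rw [hDQ]; module
      have e2 : (1 - s) • W + s • Z2.2 = W + s • DW := by rw [hDW]; module
      exact Prod.ext e1 e2
    have hcomb : ∀ k : K, (1 - s) * (C0 H0 Q - Ceav (Hm k) (Pm k) Q W)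
        + s * (C0 H0 Z2.1 - Ceav (Hm k) (Pm k) Z2.1 Z2.2)
        ≤ C0 H0 (Q + s • DQ) - Ceav (Hm k) (Pm k) (Q + s • DQ) (W + s • DW) := by
      intro k
      have hmem1 : ((Q, W) : Matrix (Fin n) (Fin n) ℂ × Matrix (Fin n) (Fin n) ℂ)
          ∈ {Z : Matrix (Fin n) (Fin n) ℂ × Matrix (Fin n) (Fin n) ℂ |
            Z.1.PosSemidef ∧ Z.2.PosSemidef} := ⟨hQ, hW⟩
      have hmem2 : Z2 ∈ {Z : Matrix (Fin n) (Fin n) ℂ × Matrix (Fin n) (Fin n) ℂ |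
            Z.1.PosSemidef ∧ Z.2.PosSemidef} := ⟨hQ2, hW2⟩
      have := (hconc k).2 hmem1 hmem2 (by linarith : (0:ℝ) ≤ 1 - s) (le_of_lt hs)
        (by ring)
      rw [hpt] at this
      simpa [smul_eq_mul] using this
    have hsum : (1 - s) * FZ + s * F2 ≤ g s := by
      have : (∑ k : K, lam k * ((1 - s) * (C0 H0 Q - Ceav (Hm k) (Pm k) Q W)
            + s * (C0 H0 Z2.1 - Ceav (Hm k) (Pm k) Z2.1 Z2.2))) ≤ g s :=
        Finset.sum_le_sum fun k _ => mul_le_mul_of_nonneg_left (hcomb k) (hlam k)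
      calc (1 - s) * FZ + s * F2
          = ∑ k : K, lam k * ((1 - s) * (C0 H0 Q - Ceav (Hm k) (Pm k) Q W)
            + s * (C0 H0 Z2.1 - Ceav (Hm k) (Pm k) Z2.1 Z2.2)) := by
            rw [hFZ, hF2, Finset.mul_sum, Finset.mul_sum, ← Finset.sum_add_distrib]
            exact Finset.sum_congr rfl fun k _ => by ring
        _ ≤ g s := this
    rw [hg0]
    rw [le_div_iff₀ hs]
    nlinarith [hsum]
  -- KKT: d ≤ 0
  have e1 : ∑ k : K, lam k • Tmat (Hm k) (Pm k) Q W
      = D0mat H0 Q - μ1 • (Gᴴ * G) - μ2 • (1 : Matrix (Fin n) (Fin n) ℂ) + M := by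
    have h := eq_neg_of_add_eq_zero_right kkt1
    rw [h]; abel
  have e2 : ∑ k : K, lam k • (Rmat (Hm k) (Pm k) Q W - Dmat (Pm k) W)
      = N - μ1 • (Vᴴ * Gᴴ * G * V) - μ2 • (1 : Matrix (Fin n) (Fin n) ℂ) := by
    have h := eq_neg_of_add_eq_zero_right kkt2
    rw [h]; abel
  have tr1 : ∑ k : K, lam k * ((Tmat (Hm k) (Pm k) Q W * DQ).trace).re
      = ((D0mat H0 Q * DQ).trace).re - μ1 * (((Gᴴ * G) * DQ).trace).re
        - μ2 * ((DQ.trace).re) + ((M * DQ).trace).re := by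
    have h := congrArg (fun X : Matrix (Fin n) (Fin n) ℂ => ((X * DQ).trace).re) e1
    simpa [Finset.sum_mul, Matrix.sub_mul, Matrix.add_mul, Matrix.smul_mul, Matrix.one_mul,
      Matrix.trace_sum, Matrix.trace_sub, Matrix.trace_add, Matrix.trace_smul,
      Complex.re_sum, Complex.sub_re, Complex.add_re, Complex.real_smul, Complex.mul_re,
      Complex.ofReal_re, Complex.ofReal_im] using h
  have tr2 : ∑ k : K, lam k * (((Rmat (Hm k) (Pm k) Q W - Dmat (Pm k) W) * DW).trace).re
      = ((N * DW).trace).re - μ1 * (((Vᴴ * Gᴴ * G * V) * DW).trace).re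
        - μ2 * ((DW.trace).re) := by
    have h := congrArg (fun X : Matrix (Fin n) (Fin n) ℂ => ((X * DW).trace).re) e2
    simpa [Finset.sum_mul, Matrix.sub_mul, Matrix.add_mul, Matrix.smul_mul, Matrix.one_mul,
      Matrix.trace_sum, Matrix.trace_sub, Matrix.trace_add, Matrix.trace_smul,
      Complex.re_sum, Complex.sub_re, Complex.add_re, Complex.real_smul, Complex.mul_re,
      Complex.ofReal_re, Complex.ofReal_im] using h
  have hRD : ∀ k : K, (((Rmat (Hm k) (Pm k) Q W - Dmat (Pm k) W) * DW).trace).re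
      = ((Rmat (Hm k) (Pm k) Q W * DW).trace).re - ((Dmat (Pm k) W * DW).trace).re := by
    intro k; rw [Matrix.sub_mul, Matrix.trace_sub, Complex.sub_re]
  have hdsplit : d = (∑ k : K, lam k) * ((D0mat H0 Q * DQ).trace).re
      - (∑ k : K, lam k * ((Tmat (Hm k) (Pm k) Q W * DQ).trace).re)
      - (∑ k : K, lam k * (((Rmat (Hm k) (Pm k) Q W - Dmat (Pm k) W) * DW).trace).re) := by
    rw [hd, Finset.sum_mul, ← Finset.sum_sub_distrib, ← Finset.sum_sub_distrib]
    refine Finset.sum_congr rfl fun k _ => ?_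
    rw [hRD k]; ring
  -- complementary slackness pieces
  have hm1 : 0 ≤ ((M * DQ).trace).re := by
    have hMD : M * DQ = M * Z2.1 := by rw [hDQ, Matrix.mul_sub, kkt4c, sub_zero]
    rw [hMD]; exact trace_mul_psd_re_nonneg hM hQ2
  have hn1 : 0 ≤ ((N * DW).trace).re := by
    have hND : N * DW = N * Z2.2 := by rw [hDW, Matrix.mul_sub, kkt4d, sub_zero]
    rw [hND]; exact trace_mul_psd_re_nonneg hN hW2
  have ha : (((Gᴴ * G) * DQ).trace).re + (((Vᴴ * Gᴴ * G * V) * DW).trace).re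
      = ((G * Z2.1 * Gᴴ + G * V * Z2.2 * Vᴴ * Gᴴ).trace).re
        - ((G * Q * Gᴴ + G * V * W * Vᴴ * Gᴴ).trace).re := by
    have t1 : ((Gᴴ * G * DQ).trace) = ((G * DQ * Gᴴ).trace) := trace_sandwich' G DQ
    have t2 : (((Vᴴ * Gᴴ * G * V) * DW).trace) = ((G * V * DW * Vᴴ * Gᴴ).trace) := by
      have h := trace_sandwich' (G * V) DW
      simpa [Matrix.conjTranspose_mul, Matrix.mul_assoc] using h
    have hGDQ : G * DQ * Gᴴ = G * Z2.1 * Gᴴ - G * Q * Gᴴ := by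
      rw [hDQ, Matrix.mul_sub, Matrix.sub_mul]
    have hGDW : G * V * DW * Vᴴ * Gᴴ = G * V * Z2.2 * Vᴴ * Gᴴ - G * V * W * Vᴴ * Gᴴ := by
      rw [hDW, Matrix.mul_sub, Matrix.sub_mul, Matrix.sub_mul]
    rw [t1, t2, hGDQ, hGDW]
    simp only [Matrix.trace_add, Matrix.trace_sub, Complex.add_re, Complex.sub_re]
    ring
  have hb : (DQ.trace).re + (DW.trace).re
      = (((Z2.1 + Z2.2).trace)).re - (((Q + W).trace)).re := by
    rw [hDQ, hDW]
    simp only [Matrix.trace_add, Matrix.trace_sub, Complex.add_re, Complex.sub_re]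
    ring
  have hdle : d ≤ 0 := by
    rw [hdsplit, tr1, tr2, kkt3]
    nlinarith [mul_nonneg hμ1 (sub_nonneg.mpr hg2), mul_nonneg hμ2 (sub_nonneg.mpr hp2),
      kkt4a, kkt4b, hm1, hn1, ha, hb]
  -- final chain
  have hCs2 : Cs H0 Hm Pm Z2.1 Z2.2 ≤ F2 := by
    have hle : ∀ k : K, Cs H0 Hm Pm Z2.1 Z2.2
        ≤ C0 H0 Z2.1 - Ceav (Hm k) (Pm k) Z2.1 Z2.2 := by
      intro k
      rw [Cs]
      have := Finset.le_sup' (fun k => Ceav (Hm k) (Pm k) Z2.1 Z2.2) (Finset.mem_univ k)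
      linarith
    calc Cs H0 Hm Pm Z2.1 Z2.2 = (∑ k : K, lam k) * Cs H0 Hm Pm Z2.1 Z2.2 := by
          rw [kkt3, one_mul]
      _ = ∑ k : K, lam k * Cs H0 Hm Pm Z2.1 Z2.2 := by rw [Finset.sum_mul]
      _ ≤ F2 := Finset.sum_le_sum fun k _ => mul_le_mul_of_nonneg_left (hle k) (hlam k)
  have hFZle : FZ ≤ Cs H0 Hm Pm Q W := by
    have hFZeq : FZ = C0 H0 Q - t := by
      rw [hFZ]
      calc ∑ k : K, lam k * (C0 H0 Q - Ceav (Hm k) (Pm k) Q W)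
          = ∑ k : K, (lam k * C0 H0 Q - lam k * t) := by
            refine Finset.sum_congr rfl fun k _ => ?_
            have h := kkt4e k
            have h2 : lam k * Ceav (Hm k) (Pm k) Q W = lam k * t := by
              have := mul_sub (lam k) (Ceav (Hm k) (Pm k) Q W) t
              linarith
            rw [mul_sub, h2]
        _ = (∑ k : K, lam k) * C0 H0 Q - (∑ k : K, lam k) * t := by
            rw [Finset.sum_sub_distrib, Finset.sum_mul, Finset.sum_mul]
        _ = C0 H0 Q - t := by rw [kkt3, one_mul, one_mul]
    have hsup : Finset.univ.sup' Finset.univ_nonempty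
        (fun k => Ceav (Hm k) (Pm k) Q W) ≤ t :=
      Finset.sup'_le _ _ fun k _ => kkt5b k
    rw [hFZeq, Cs]
    linarith
  linarith [hslope, hdle, hCs2, hFZle]

end SRM
end
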